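/- Let p ≥ 1, Y ⊆ ℝ^p, σ a permutation of {1,…,p}, and y ∈ Y such that for every y' ∈ Y the permuted vector (y_{σ(1)},…,y_{σ(p)}) is lexicographically less than or equal to (y'_{σ(1)},…,y'_{σ(p)}). Then y ∈ Y_ESN, i.e., y is nondominated in Y and y is an extreme point of conv(Y). -/

import Mathlib

open Set Pointwise

/-- The set of points of `A` that are nondominated in `A` (componentwise order). -/
def nonDomPts (p : ℕ) (A : Set (Fin p → ℝ)) : Set (Fin p → ℝ) :=
  {y | y ∈ A ∧ ∀ y' ∈ A, y' ≤ y → y' = y}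

/-- Extreme-supported nondominated points of `Y`. -/
def ESN (p : ℕ) (Y : Set (Fin p → ℝ)) : Set (Fin p → ℝ) :=
  {y | y ∈ nonDomPts p Y ∧ y ∈ Set.extremePoints ℝ (convexHull ℝ Y)}

/-- The lexicographic order on `ℝ^p`: `u ≤_lex v` iff `u = v` or `u i < v i` at the
smallest index `i` where they differ. -/
def lexLE {p : ℕ} (u v : Fin p → ℝ) : Prop :=
  u = v ∨ ∃ i : Fin p, (∀ j : Fin p, j < i → u j = v j) ∧ u i < v i

lemma lexLE_combo {p : ℕ} {u v w : Fin p → ℝ} {a b : ℝ} (ha : 0 ≤ a) (hb : 0 ≤ b)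
    (hab : a + b = 1) (huv : lexLE u v) (huw : lexLE u w) :
    lexLE u (a • v + b • w) := by
  rcases eq_or_lt_of_le ha with ha0 | ha0
  · have hb1 : b = 1 := by linarith
    subst hb1
    have : a • v + (1:ℝ) • w = w := by
      funext j; simp [← ha0]
    rw [this]; exact huw
  rcases eq_or_lt_of_le hb with hb0 | hb0
  · have ha1 : a = 1 := by linarith
    subst ha1
    have : (1:ℝ) • v + b • w = v := by
      funext j; simp [← hb0]
    rw [this]; exact huv
  rcases huv with rfl | ⟨i, hvi, hvi'⟩
  · rcases huw with rfl | ⟨k, hwk, hwk'⟩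
    · left; funext j; simp only [Pi.add_apply, Pi.smul_apply, smul_eq_mul]
      linear_combination (-(u j)) * hab
    · right
      refine ⟨k, fun j hj => ?_, ?_⟩
      · simp only [Pi.add_apply, Pi.smul_apply, smul_eq_mul, ← hwk j hj]
        linear_combination (-(u j)) * hab
      · simp only [Pi.add_apply, Pi.smul_apply, smul_eq_mul]
        have hsum : a * u k + b * u k = u k := by linear_combination (u k) * hab
        have := mul_lt_mul_of_pos_left hwk' hb0
        linarith
  · rcases huw with rfl | ⟨k, hwk, hwk'⟩
    · right
      refine ⟨i, fun j hj => ?_, ?_⟩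
      · simp only [Pi.add_apply, Pi.smul_apply, smul_eq_mul, ← hvi j hj]
        linear_combination (-(u j)) * hab
      · simp only [Pi.add_apply, Pi.smul_apply, smul_eq_mul]
        have hsum : a * u i + b * u i = u i := by linear_combination (u i) * hab
        have := mul_lt_mul_of_pos_left hvi' ha0
        linarith
    · right
      refine ⟨min i k, fun j hj => ?_, ?_⟩
      · rw [lt_min_iff] at hj
        simp only [Pi.add_apply, Pi.smul_apply, smul_eq_mul, ← hvi j hj.1, ← hwk j hj.2]
        linear_combination (-(u j)) * hab
      · have h1 : u (min i k) ≤ v (min i k) := by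
          rcases lt_or_eq_of_le (min_le_left i k) with h | h
          · exact (hvi _ h).le
          · rw [h]; exact hvi'.le
        have h2 : u (min i k) ≤ w (min i k) := by
          rcases lt_or_eq_of_le (min_le_right i k) with h | h
          · exact (hwk _ h).le
          · rw [h]; exact hwk'.le
        have h3 : u (min i k) < v (min i k) ∨ u (min i k) < w (min i k) := by
          rcases min_cases i k with ⟨he, _⟩ | ⟨he, _⟩
          · left; rw [he]; exact hvi'
          · right; rw [he]; exact hwk'
        simp only [Pi.add_apply, Pi.smul_apply, smul_eq_mul]
        have hsum : a * u (min i k) + b * u (min i k) = u (min i k) := by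
          linear_combination (u (min i k)) * hab
        rcases h3 with h | h
        · have := mul_lt_mul_of_pos_left h ha0
          have := mul_le_mul_of_nonneg_left h2 hb0.le
          linarith
        · have := mul_lt_mul_of_pos_left h hb0
          have := mul_le_mul_of_nonneg_left h1 ha0.le
          linarith

lemma lexLE_comb_eq {p : ℕ} {u v w : Fin p → ℝ} {a b : ℝ} (ha : 0 < a) (hb : 0 < b)
    (hab : a + b = 1) (huv : lexLE u v) (huw : lexLE u w)
    (heq : a • v + b • w = u) : v = u ∧ w = u := by
  rcases huv with rfl | ⟨i, hvi, hvi'⟩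
  · rcases huw with rfl | ⟨k, hwk, hwk'⟩
    · exact ⟨rfl, rfl⟩
    · exfalso
      have h := congrFun heq k
      simp only [Pi.add_apply, Pi.smul_apply, smul_eq_mul] at h
      have hsum : a * u k + b * u k = u k := by linear_combination (u k) * hab
      have := mul_lt_mul_of_pos_left hwk' hb
      linarith
  · rcases huw with rfl | ⟨k, hwk, hwk'⟩
    · exfalso
      have h := congrFun heq i
      simp only [Pi.add_apply, Pi.smul_apply, smul_eq_mul] at h
      have hsum : a * u i + b * u i = u i := by linear_combination (u i) * hab
      have := mul_lt_mul_of_pos_left hvi' ha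
      linarith
    · exfalso
      have h := congrFun heq (min i k)
      simp only [Pi.add_apply, Pi.smul_apply, smul_eq_mul] at h
      have h1 : u (min i k) ≤ v (min i k) := by
        rcases lt_or_eq_of_le (min_le_left i k) with hh | hh
        · exact (hvi _ hh).le
        · rw [hh]; exact hvi'.le
      have h2 : u (min i k) ≤ w (min i k) := by
        rcases lt_or_eq_of_le (min_le_right i k) with hh | hh
        · exact (hwk _ hh).le
        · rw [hh]; exact hwk'.le
      have h3 : u (min i k) < v (min i k) ∨ u (min i k) < w (min i k) := by
        rcases min_cases i k with ⟨he, _⟩ | ⟨he, _⟩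
        · left; rw [he]; exact hvi'
        · right; rw [he]; exact hwk'
      have hsum : a * u (min i k) + b * u (min i k) = u (min i k) := by
        linear_combination (u (min i k)) * hab
      rcases h3 with hh | hh
      · have := mul_lt_mul_of_pos_left hh ha
        have := mul_le_mul_of_nonneg_left h2 hb.le
        linarith
      · have := mul_lt_mul_of_pos_left hh hb
        have := mul_le_mul_of_nonneg_left h1 ha.le
        linarith

theorem stmt_2 (p : ℕ) (hp : 1 ≤ p) (Y : Set (Fin p → ℝ)) (σ : Equiv.Perm (Fin p))
    (y : Fin p → ℝ) (hy : y ∈ Y)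
    (hlex : ∀ y' ∈ Y, lexLE (fun i => y (σ i)) (fun i => y' (σ i))) :
    y ∈ ESN p Y := by
  constructor
  · refine ⟨hy, fun y' hy' hle => ?_⟩
    rcases hlex y' hy' with h | ⟨i, _, hi⟩
    · funext j
      have := congrFun h (σ.symm j)
      simpa using this.symm
    · exact absurd (hle (σ i)) (not_le.2 hi)
  · set S : Set (Fin p → ℝ) := {z | lexLE (fun i => y (σ i)) (fun i => z (σ i))} with hSdef
    have hSconv : Convex ℝ S := by
      intro x hx z hz a b ha hb hab
      have := lexLE_combo (u := fun i => y (σ i)) (v := fun i => x (σ i))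
        (w := fun i => z (σ i)) ha hb hab hx hz
      exact this
    have hsub : convexHull ℝ Y ⊆ S := convexHull_min (fun z hz => hlex z hz) hSconv
    refine ⟨subset_convexHull ℝ Y hy, ?_⟩
    intro x hx z hz hseg
    obtain ⟨a, b, ha, hb, hab, hcomb⟩ := hseg
    have hxS : lexLE (fun i => y (σ i)) (fun i => x (σ i)) := hsub hx
    have hzS : lexLE (fun i => y (σ i)) (fun i => z (σ i)) := hsub hz
    have hcomb' : a • (fun i => x (σ i)) + b • (fun i => z (σ i)) = fun i => y (σ i) := by
      funext j
      have := congrFun hcomb (σ j)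
      simpa using this
    obtain ⟨h1, h2⟩ := lexLE_comb_eq ha hb hab hxS hzS hcomb'
    funext j; have := congrFun h1 (σ.symm j); simpa using this
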